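/- Let M be an H₄-module which is free of rank one over U(ℂs) = ℂ[s] with s acting by multiplication. If p·1 ≠ 0 or q·1 ≠ 0, then r·1 is a constant polynomial. -/
import Mathlib


open Polynomial

private lemma shift_apply (A : Module.End ℂ (Polynomial ℂ)) (c : ℂ)
    (hA : ∀ f, A (X * f) = (X - C c) * A f) :
    ∀ f : Polynomial ℂ, A f = f.comp (X - C c) * A 1 := by
  intro f
  induction f using Polynomial.induction_on with
  | C a =>
      have h1 : (C a : Polynomial ℂ) = a • 1 := by simp [Polynomial.smul_eq_C_mul]
      rw [h1, map_smul]
      simp [Polynomial.smul_eq_C_mul]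
  | add f g hf hg => simp [map_add, hf, hg, add_mul]
  | monomial n a ih =>
      have h1 : C a * X ^ (n + 1) = X * (C a * X ^ n) := by ring
      rw [h1, hA, ih]
      simp only [mul_comp, C_comp, pow_comp, X_comp, pow_succ]
      ring

private lemma const_of_shift (r : Polynomial ℂ) (c : ℂ) (hc : c ≠ 0)
    (hr : r.comp (X - C c) = r) : ∃ d, r = C d := by
  have heval : ∀ z : ℂ, r.eval (z - c) = r.eval z := by
    intro z
    conv_rhs => rw [← hr]
    simp [Polynomial.eval_comp]
  have hnat : ∀ n : ℕ, r.eval (-(n : ℂ) * c) = r.eval 0 := by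
    intro n
    induction n with
    | zero => simp
    | succ n ih =>
        have h1 : (-(↑(n + 1) : ℂ) * c) = (-(n : ℂ) * c) - c := by push_cast; ring
        rw [h1, heval, ih]
  have hroots : {z : ℂ | (r - C (r.eval 0)).IsRoot z}.Infinite := by
    apply Set.Infinite.mono (s := Set.range (fun n : ℕ => -(n : ℂ) * c))
    · rintro z ⟨n, rfl⟩
      simp only [Set.mem_setOf_eq, Polynomial.IsRoot, Polynomial.eval_sub,
        Polynomial.eval_C, hnat n, sub_self]
    · apply Set.infinite_range_of_injective
      intro a b hab
      simp only [neg_mul, neg_inj] at hab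
      exact_mod_cast mul_right_cancel₀ hc hab
  have hz : r - C (r.eval 0) = 0 := Polynomial.eq_zero_of_infinite_isRoot _ hroots
  exact ⟨r.eval 0, sub_eq_zero.mp hz⟩

/-- Let M be an H₄-module free of rank one over U(ℂs) = ℂ[s] with s acting by
multiplication.  If p·1 ≠ 0 or q·1 ≠ 0 then r·1 is a constant polynomial. -/
theorem stmt8 (P Q R S : Module.End ℂ (Polynomial ℂ))
    (hS : ∀ x, S x = Polynomial.X * x)
    (hPQ : ⁅P, Q⁆ = R) (hSP : ⁅S, P⁆ = P) (hSQ : ⁅S, Q⁆ = -Q)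
    (hRP : ⁅R, P⁆ = 0) (hRQ : ⁅R, Q⁆ = 0) (hRS : ⁅R, S⁆ = 0)
    (h : P 1 ≠ 0 ∨ Q 1 ≠ 0) :
    ∃ c : ℂ, R 1 = Polynomial.C c := by
  have hP : ∀ f, P (X * f) = (X - C 1) * P f := by
    intro f
    have h1 := LinearMap.congr_fun hSP f
    rw [Ring.lie_def] at h1
    simp only [LinearMap.sub_apply, Module.End.mul_apply, hS] at h1
    have h2 : P (X * f) = X * P f - P f := by linear_combination -h1
    rw [h2, Polynomial.C_1]; ring
  have hQ : ∀ f, Q (X * f) = (X - C (-1)) * Q f := by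
    intro f
    have h1 := LinearMap.congr_fun hSQ f
    rw [Ring.lie_def] at h1
    simp only [LinearMap.sub_apply, LinearMap.neg_apply, Module.End.mul_apply, hS] at h1
    have h2 : Q (X * f) = X * Q f + Q f := by linear_combination -h1
    rw [h2]; simp only [map_neg, Polynomial.C_1]; ring
  have hR : ∀ f, R (X * f) = X * R f := by
    intro f
    have h1 := LinearMap.congr_fun hRS f
    rw [Ring.lie_def] at h1
    simp only [LinearMap.sub_apply, LinearMap.zero_apply, Module.End.mul_apply, hS] at h1
    linear_combination h1
  have hRlin : ∀ f, R f = f * R 1 := by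
    intro f
    have h1 := shift_apply R 0 (by simpa using hR) f
    simpa using h1
  rcases h with hp | hq
  · -- use [R,P] = 0
    have h1 := LinearMap.congr_fun hRP (1 : Polynomial ℂ)
    rw [Ring.lie_def] at h1
    simp only [LinearMap.sub_apply, LinearMap.zero_apply, Module.End.mul_apply] at h1
    have h2 : R (P 1) = P (R 1) := by linear_combination h1
    rw [hRlin (P 1), shift_apply P 1 hP (R 1)] at h2
    have h3 : (R 1) * (P 1) = (R 1).comp (X - C 1) * P 1 := by
      linear_combination h2
    have h4 : R 1 = (R 1).comp (X - C 1) := mul_right_cancel₀ hp h3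
    exact const_of_shift (R 1) 1 one_ne_zero h4.symm
  · have h1 := LinearMap.congr_fun hRQ (1 : Polynomial ℂ)
    rw [Ring.lie_def] at h1
    simp only [LinearMap.sub_apply, LinearMap.zero_apply, Module.End.mul_apply] at h1
    have h2 : R (Q 1) = Q (R 1) := by linear_combination h1
    rw [hRlin (Q 1), shift_apply Q (-1) hQ (R 1)] at h2
    have h3 : (R 1) * (Q 1) = (R 1).comp (X - C (-1)) * Q 1 := by
      linear_combination h2
    have h4 : R 1 = (R 1).comp (X - C (-1)) := mul_right_cancel₀ hq h3
    exact const_of_shift (R 1) (-1) (by norm_num) h4.symm
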